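/- Let B > 1 and let m ≥ 2 be an integer. Fix p_1, ..., p_{m−1} ∈ (0,1) with p_1 + ... + p_{m−1} < 1 and set p_m = 1 − (p_1 + ... + p_{m−1}). Suppose log_B(p_1/p_2) is irrational. For N ≥ 1 and an interval (a,b) ⊂ (0,1), let F_N(a,b) = (1/m^N)·Σ (N choose k_1,...,k_m)·𝟙(log_B(p_1^{k_1}⋯p_m^{k_m}) mod 1 ∈ (a,b)), the sum over all nonnegative integer tuples with k_1 + ... + k_m = N. Then F_N(a,b) → b − a as N → ∞. -/

import Mathlib

open Finset Filter MeasureTheory Set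
open scoped Topology NNReal ENNReal Real BoundedContinuousFunction

noncomputable section

namespace StickBenford


lemma sum_multinomial (m N : ℕ) :
    ∑ k ∈ Finset.Nat.antidiagonalTuple m N, Nat.multinomial Finset.univ k = m ^ N := by
  have := Finset.sum_pow_eq_sum_piAntidiag (univ : Finset (Fin m)) (fun _ => (1:ℕ)) N
  simpa [Finset.piAntidiag_univ_fin_eq_antidiagonalTuple] using this.symm

lemma sum_multinomial_prod (m N : ℕ) (f : Fin m → ℂ) :
    ∑ k ∈ Finset.Nat.antidiagonalTuple m N,
        (Nat.multinomial Finset.univ k : ℂ) * ∏ i, f i ^ k i = (∑ i, f i) ^ N := by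
  rw [← Finset.piAntidiag_univ_fin_eq_antidiagonalTuple, Finset.sum_pow_eq_sum_piAntidiag]

lemma norm_sum_lt {m : ℕ} (hm : 2 ≤ m) (z : Fin m → ℂ) (hz : ∀ i, ‖z i‖ = 1)
    (hne : z ⟨0, by linarith⟩ ≠ z ⟨1, by linarith⟩) : ‖∑ i, z i‖ < m := by
  set i0 : Fin m := ⟨0, by linarith⟩ with hi0
  set i1 : Fin m := ⟨1, by linarith⟩ with hi1
  have h01 : i1 ≠ i0 := by simp [hi0, hi1, Fin.ext_iff]
  have hsplit : ∑ i, z i = (z i0 + z i1) + ∑ i ∈ (univ.erase i0).erase i1, z i := by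
    rw [← Finset.sum_erase_add univ z (mem_univ i0),
      ← Finset.sum_erase_add (univ.erase i0) z (Finset.mem_erase.mpr ⟨h01, mem_univ i1⟩)]
    ring
  have hlt : ‖z i0 + z i1‖ < 2 := by
    rcases lt_or_eq_of_le (norm_add_le (z i0) (z i1)) with h | h
    · calc ‖z i0 + z i1‖ < ‖z i0‖ + ‖z i1‖ := h
        _ = 2 := by rw [hz, hz]; norm_num
    · exact absurd (eq_of_norm_eq_of_norm_add_eq (by rw [hz, hz]) h) hne
  have hcard : ((univ.erase i0).erase i1).card = m - 2 := by
    rw [Finset.card_erase_of_mem (Finset.mem_erase.mpr ⟨h01, mem_univ i1⟩),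
      Finset.card_erase_of_mem (mem_univ i0), Finset.card_univ, Fintype.card_fin]; omega
  have hrest : ‖∑ i ∈ (univ.erase i0).erase i1, z i‖ ≤ (m : ℝ) - 2 := by
    refine (norm_sum_le _ _).trans ?_
    simp only [hz]
    rw [Finset.sum_const, hcard, nsmul_eq_mul, mul_one, Nat.cast_sub hm]
    norm_num
  calc ‖∑ i, z i‖ ≤ ‖z i0 + z i1‖ + ‖∑ i ∈ (univ.erase i0).erase i1, z i‖ := by
        rw [hsplit]; exact norm_add_le _ _
    _ < 2 + ((m:ℝ) - 2) := by linarith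
    _ = m := by ring



lemma isFiniteMeasure_smul_dirac {X : Type*} [MeasurableSpace X] (w : ℝ≥0) (y : X) :
    IsFiniteMeasure ((w : ℝ≥0∞) • Measure.dirac y) := by
  constructor
  rw [Measure.smul_apply, smul_eq_mul, measure_univ, mul_one]
  exact ENNReal.coe_lt_top

lemma integral_sum_smul_dirac {X : Type*} [MeasurableSpace X] [TopologicalSpace X]
    [OpensMeasurableSpace X] [MeasurableSingletonClass X] [CompactSpace X]
    {E : Type*} [NormedAddCommGroup E] [NormedSpace ℝ E] [CompleteSpace E] [MeasurableSpace E] [BorelSpace E]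
    [SecondCountableTopology E]
    {ι : Type*} (s : Finset ι) (w : ι → ℝ≥0) (y : ι → X) (f : C(X, E)) :
    ∫ z, f z ∂(∑ k ∈ s, ((w k : ℝ≥0∞)) • Measure.dirac (y k))
      = ∑ k ∈ s, (w k : ℝ) • f (y k) := by
  rw [integral_finset_sum_measure (fun k _ => ?_)]
  · refine Finset.sum_congr rfl fun k _ => ?_
    rw [integral_smul_measure, integral_dirac]
    simp
  · have := isFiniteMeasure_smul_dirac (w k) (y k)
    exact (BoundedContinuousFunction.mkOfCompact f).integrable _

open scoped Classical in
lemma apply_sum_smul_dirac {X : Type*} [MeasurableSpace X]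
    {ι : Type*} (s : Finset ι) (w : ι → ℝ≥0) (y : ι → X) {A : Set X} (hA : MeasurableSet A) :
    (∑ k ∈ s, ((w k : ℝ≥0∞)) • Measure.dirac (y k)) A
      = ∑ k ∈ s, (w k : ℝ≥0∞) * (if y k ∈ A then 1 else 0) := by
  rw [Measure.finset_sum_apply]
  refine Finset.sum_congr rfl fun k _ => ?_
  rw [Measure.smul_apply, smul_eq_mul, Measure.dirac_apply' _ hA]
  by_cases h : y k ∈ A <;> simp [h]

lemma coe_fract (y : ℝ) : ((Int.fract y : ℝ) : AddCircle (1:ℝ)) = (y : AddCircle (1:ℝ)) := by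
  rw [QuotientAddGroup.eq]
  have h1 : -Int.fract y + y = (⌊y⌋ : ℝ) := by
    rw [neg_add_eq_sub, Int.self_sub_fract]
  rw [h1]
  exact AddSubgroup.mem_zmultiples_iff.mpr ⟨⌊y⌋, by simp [zsmul_eq_mul]⟩

lemma mem_image_Ioo_iff {a b : ℝ} (ha : 0 ≤ a) (hb : b ≤ 1) (y : ℝ) :
    ((y : AddCircle (1:ℝ)) ∈ ((↑) : ℝ → AddCircle (1:ℝ)) '' Set.Ioo a b)
      ↔ Int.fract y ∈ Set.Ioo a b := by
  have hsub : Set.Ioo a b ⊆ Set.Ico 0 (0 + 1) := fun t ht => ⟨ha.trans ht.1.le, by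
    simpa using ht.2.trans_le hb⟩
  constructor
  · rintro ⟨t, ht, hty⟩
    have hfr : (Int.fract y : ℝ) ∈ Set.Ico (0:ℝ) (0 + 1) := by
      constructor
      · exact Int.fract_nonneg y
      · simpa using Int.fract_lt_one y
    rw [← coe_fract y] at hty
    rw [AddCircle.coe_eq_coe_iff_of_mem_Ico (hsub ht) hfr] at hty
    exact hty ▸ ht
  · intro hfr
    exact ⟨Int.fract y, hfr, coe_fract y⟩

lemma measurable_E {a b : ℝ} :
    MeasurableSet (((↑) : ℝ → AddCircle (1:ℝ)) '' Set.Ioo a b) :=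
  (QuotientAddGroup.isOpenMap_coe _ isOpen_Ioo).measurableSet

lemma volume_image_Ioo {a b : ℝ} (ha : 0 < a) (hab : a < b) (hb : b < 1) :
    volume (((↑) : ℝ → AddCircle (1:ℝ)) '' Set.Ioo a b) = ENNReal.ofReal (b - a) := by
  rw [AddCircle.add_projection_respects_measure (1:ℝ) 0 measurable_E]
  have hset : (QuotientAddGroup.mk ⁻¹' (((↑) : ℝ → AddCircle (1:ℝ)) '' Set.Ioo a b))
      ∩ Set.Ioc 0 (0 + 1) = Set.Ioo a b := by
    ext y
    simp only [Set.mem_inter_iff, Set.mem_preimage, Set.mem_Ioc, Set.mem_Ioo]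
    constructor
    · rintro ⟨hy, hy1, hy2⟩
      have := (mem_image_Ioo_iff ha.le hb.le y).mp hy
      rcases lt_or_eq_of_le hy2 with h | h
      · rwa [Int.fract_eq_self.mpr ⟨hy1.le, by simpa using h⟩] at this
      · exfalso
        have hf0 : Int.fract y = 0 := by rw [h]; norm_num
        rw [hf0] at this
        exact absurd this.1 (by linarith)
    · intro hy
      refine ⟨(mem_image_Ioo_iff ha.le hb.le y).mpr ?_, ha.trans hy.1, by simpa using (hy.2.trans hb).le⟩
      rw [Int.fract_eq_self.mpr ⟨(ha.trans hy.1).le, hy.2.trans hb⟩]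
      exact hy
  rw [hset, Real.volume_Ioo]

lemma volume_singleton_circ {t : ℝ} (ht : 0 < t) (ht1 : t < 1) :
    volume ({((t : ℝ) : AddCircle (1:ℝ))} : Set (AddCircle (1:ℝ))) = 0 := by
  rw [AddCircle.add_projection_respects_measure (1:ℝ) 0 (measurableSet_singleton _)]
  have hset : (QuotientAddGroup.mk ⁻¹' ({((t : ℝ) : AddCircle (1:ℝ))} : Set (AddCircle (1:ℝ))))
      ∩ Set.Ioc 0 (0 + 1) = {t} := by
    ext y
    simp only [Set.mem_inter_iff, Set.mem_preimage, Set.mem_singleton_iff, Set.mem_Ioc]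
    constructor
    · rintro ⟨hy, h0, h1⟩
      have hy' : (y : AddCircle (1:ℝ)) = (t : ℝ) := hy
      rcases lt_or_eq_of_le h1 with h | h
      · exact (AddCircle.coe_eq_coe_iff_of_mem_Ico (a := (0:ℝ))
          ⟨h0.le, h⟩ ⟨ht.le, by simpa using ht1⟩).mp hy'
      · exfalso
        have h10 : ((1 : ℝ) : AddCircle (1:ℝ)) = ((0 : ℝ) : AddCircle (1:ℝ)) := by
          have := AddCircle.coe_period (p := (1:ℝ))
          simpa using this
        have hy1 : y = 1 := by simpa using h
        rw [hy1, h10] at hy'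
        have : (0:ℝ) = t := (AddCircle.coe_eq_coe_iff_of_mem_Ico (a := (0:ℝ))
          ⟨le_refl _, by norm_num⟩ ⟨ht.le, by simpa using ht1⟩).mp hy'
        linarith
    · rintro rfl
      exact ⟨rfl, ht, by linarith⟩
  rw [hset, Real.volume_singleton]

lemma frontier_null {a b : ℝ} (ha : 0 < a) (hab : a < b) (hb : b < 1) :
    volume (frontier (((↑) : ℝ → AddCircle (1:ℝ)) '' Set.Ioo a b)) = 0 := by
  set E : Set (AddCircle (1:ℝ)) := ((↑) : ℝ → AddCircle (1:ℝ)) '' Set.Ioo a b with hE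
  have hopen : IsOpen E := QuotientAddGroup.isOpenMap_coe _ isOpen_Ioo
  have hKclosed : IsClosed (((↑) : ℝ → AddCircle (1:ℝ)) '' Set.Icc a b) :=
    (isCompact_Icc.image (AddCircle.continuous_mk' 1)).isClosed
  have hsub : frontier E ⊆ (((↑) : ℝ → AddCircle (1:ℝ)) '' {a}) ∪
      (((↑) : ℝ → AddCircle (1:ℝ)) '' {b}) := by
    intro z hz
    have hz1 : z ∈ closure E := hz.1
    have hz2 : z ∉ E := by
      have := hopen.frontier_eq
      rw [this] at hz
      exact hz.2
    have hzK : z ∈ ((↑) : ℝ → AddCircle (1:ℝ)) '' Set.Icc a b :=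
      closure_minimal (Set.image_mono Set.Ioo_subset_Icc_self) hKclosed hz1
    rcases hzK with ⟨t, ht, rfl⟩
    rcases eq_or_lt_of_le ht.1 with h | h1
    · exact Or.inl ⟨a, rfl, by rw [h]⟩
    rcases eq_or_lt_of_le ht.2 with h | h2
    · exact Or.inr ⟨b, rfl, by rw [h]⟩
    · exact absurd ⟨t, ⟨h1, h2⟩, rfl⟩ hz2
  refine le_antisymm ((measure_mono hsub).trans ?_) (by simp)
  refine (measure_union_le _ _).trans ?_
  rw [Set.image_singleton, Set.image_singleton, volume_singleton_circ ha (hab.trans hb),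
    volume_singleton_circ (ha.trans hab) hb]
  simp

lemma volume_prob : IsProbabilityMeasure (volume : Measure (AddCircle (1:ℝ))) :=
  ⟨by rw [AddCircle.measure_univ]; norm_num⟩

lemma fourier_integral_zero {n : ℤ} (hn : n ≠ 0) :
    ∫ z, fourier n z ∂(volume : Measure (AddCircle (1:ℝ))) = 0 := by
  exact integral_eq_zero_of_add_right_eq_neg (fourier_add_half_inv_index hn one_pos)


lemma exp_ne_of_irrational {c0 c1 : ℝ} (hirr : Irrational (c0 - c1)) {n : ℤ} (hn : n ≠ 0) :
    Complex.exp (2 * Real.pi * Complex.I * n * c0) ≠ Complex.exp (2 * Real.pi * Complex.I * n * c1) := by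
  intro h
  rw [Complex.exp_eq_exp_iff_exists_int] at h
  obtain ⟨k, hk⟩ := h
  have hne : (2 * (Real.pi : ℂ) * Complex.I) ≠ 0 := by
    refine mul_ne_zero (mul_ne_zero two_ne_zero ?_) Complex.I_ne_zero
    exact_mod_cast Real.pi_ne_zero
  have h2 : (2 * (Real.pi : ℂ) * Complex.I) * ((n : ℂ) * c0) =
      (2 * (Real.pi : ℂ) * Complex.I) * ((n : ℂ) * c1 + k) := by
    linear_combination hk
  have h3 : (n : ℂ) * c0 = (n : ℂ) * c1 + k := mul_left_cancel₀ hne h2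
  have h4 : (n : ℝ) * c0 = (n : ℝ) * c1 + k := by exact_mod_cast h3
  have h5 : (n : ℝ) * (c0 - c1) = (k : ℝ) := by ring_nf; linarith
  exact absurd h5 ((hirr.intCast_mul hn).ne_int k)

end StickBenford

open Finset Filter

/-- Multi-proportion fixed fragmentation: if `log_B(p₁/p₂)` is irrational, then the
empirical probability that the logarithm (base `B`) of a stick length after stage `N`
lies, mod 1, in `(a,b)` converges to `b − a`; i.e., the stick lengths converge to strong
Benford behavior base `B`. -/
theorem stick_fragmentation_benford (B : ℝ) (hB : 1 < B) (m : ℕ) (hm : 2 ≤ m)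
    (p : Fin m → ℝ) (hp : ∀ i, 0 < p i ∧ p i < 1) (hsum : ∑ i, p i = 1)
    (hirr : Irrational (Real.logb B (p ⟨0, by omega⟩ / p ⟨1, by omega⟩)))
    (a b : ℝ) (ha : 0 < a) (hab : a < b) (hb : b < 1) :
    Tendsto (fun N : ℕ =>
        (1 / (m : ℝ) ^ N) * ∑ k ∈ Finset.Nat.antidiagonalTuple m N,
          (Nat.multinomial Finset.univ k : ℝ) *
            (if a < Int.fract (Real.logb B (∏ i, p i ^ k i)) ∧
                Int.fract (Real.logb B (∏ i, p i ^ k i)) < b then 1 else 0))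
      atTop (nhds (b - a)) := by
  classical
  have h0m : 0 < m := by omega
  set c : Fin m → ℝ := fun i => Real.logb B (p i) with hc
  set x : (Fin m → ℕ) → ℝ := fun k => ∑ i, (k i : ℝ) * c i with hx
  have hlog : ∀ k : Fin m → ℕ, Real.logb B (∏ i, p i ^ k i) = x k := by
    intro k
    rw [hx]
    simp only [hc]
    rw [Real.logb, Real.log_prod (fun i _ => pow_ne_zero _ (hp i).1.ne'), Finset.sum_div]
    refine Finset.sum_congr rfl fun i _ => ?_
    rw [Real.log_pow, Real.logb]
    ring
  set E : Set (AddCircle (1:ℝ)) := ((↑) : ℝ → AddCircle (1:ℝ)) '' Set.Ioo a b with hEdef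
  set w : ℕ → (Fin m → ℕ) → ℝ≥0 :=
    fun N k => (Nat.multinomial Finset.univ k : ℝ≥0) / (m : ℝ≥0) ^ N with hw
  set μ : ℕ → Measure (AddCircle (1:ℝ)) := fun N =>
    ∑ k ∈ Finset.Nat.antidiagonalTuple m N,
      ((w N k : ℝ≥0∞)) • Measure.dirac ((x k : ℝ) : AddCircle (1:ℝ)) with hμ
  have hmNN : (m : ℝ≥0) ≠ 0 := Nat.cast_ne_zero.mpr h0m.ne'
  have hwsum : ∀ N, ∑ k ∈ Finset.Nat.antidiagonalTuple m N, w N k = 1 := by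
    intro N
    simp only [hw]
    rw [← Finset.sum_div, div_eq_one_iff_eq (pow_ne_zero _ hmNN), ← Nat.cast_sum,
      StickBenford.sum_multinomial]
    push_cast
    ring
  have hprob : ∀ N, IsProbabilityMeasure (μ N) := by
    intro N
    constructor
    simp only [hμ]
    rw [StickBenford.apply_sum_smul_dirac _ _ _ MeasurableSet.univ]
    simp only [Set.mem_univ, if_true, mul_one]
    rw [← ENNReal.coe_finset_sum, hwsum N, ENNReal.coe_one]
  have probToFin : ∀ (ν : Measure (AddCircle (1:ℝ))), IsProbabilityMeasure ν → IsFiniteMeasure ν :=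
    fun ν hν => by haveI := hν; infer_instance
  have hμfin : ∀ N, IsFiniteMeasure (μ N) := fun N => probToFin _ (hprob N)
  have hint : ∀ (g : C(AddCircle (1:ℝ), ℂ)) (ν : Measure (AddCircle (1:ℝ))),
      IsFiniteMeasure ν → Integrable ⇑g ν := by
    intro g ν hν
    have := (BoundedContinuousFunction.mkOfCompact g).integrable ν
    exact this
  -- the exponentials
  set e : ℤ → Fin m → ℂ := fun n i => Complex.exp (2 * Real.pi * Complex.I * n * c i) with he
  have hfourier_eval : ∀ (n : ℤ) (k : Fin m → ℕ),
      (fourier n) (((x k : ℝ) : AddCircle (1:ℝ))) = ∏ i, (e n i) ^ k i := by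
    intro n k
    rw [fourier_coe_apply, Complex.ofReal_one, div_one]
    have h1 : ∀ i : Fin m, (e n i) ^ k i
        = Complex.exp ((k i : ℂ) * (2 * Real.pi * Complex.I * n * c i)) := by
      intro i
      rw [he]
      rw [← Complex.exp_nat_mul]
    rw [Finset.prod_congr rfl (fun i _ => h1 i), ← Complex.exp_sum]
    congr 1
    simp only [hx]
    push_cast
    rw [Finset.mul_sum]
    exact Finset.sum_congr rfl fun i _ => by ring
  have hweylsum : ∀ (n : ℤ) (N : ℕ),
      ∫ z, (fourier n) z ∂ (μ N) = ((∑ i, e n i) / m) ^ N := by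
    intro n N
    simp only [hμ]
    rw [StickBenford.integral_sum_smul_dirac]
    rw [div_pow, ← StickBenford.sum_multinomial_prod m N (e n)]
    rw [eq_div_iff (pow_ne_zero _ (Nat.cast_ne_zero.mpr h0m.ne' : (m:ℂ) ≠ 0)), Finset.sum_mul]
    refine Finset.sum_congr rfl fun k _ => ?_
    rw [hfourier_eval n k]
    have hwc : ((w N k : ℝ) : ℂ) = (Nat.multinomial Finset.univ k : ℂ) / (m : ℂ) ^ N := by
      simp only [hw]
      push_cast
      ring
    rw [Complex.real_smul, hwc]
    field_simp
    rw [mul_assoc, mul_div_assoc, mul_div_cancel_left₀ _ (pow_ne_zero _ (Nat.cast_ne_zero.mpr h0m.ne' : (m:ℂ) ≠ 0))]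
  have hnorm1 : ∀ (n : ℤ) (i : Fin m), ‖e n i‖ = 1 := by
    intro n i
    have h1 : (2 * (Real.pi:ℂ) * Complex.I * n * c i)
        = ((2 * Real.pi * n * c i : ℝ) : ℂ) * Complex.I := by
      push_cast
      ring
    rw [he]
    simp only []
    rw [h1, Complex.norm_exp_ofReal_mul_I]
  have hS : ∀ n : ℤ, n ≠ 0 → ‖(∑ i, e n i) / m‖ < 1 := by
    intro n hn
    rw [norm_div, Complex.norm_natCast]
    rw [div_lt_one (by exact_mod_cast h0m)]
    refine StickBenford.norm_sum_lt hm (e n) (hnorm1 n) ?_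
    simp only [he]
    refine StickBenford.exp_ne_of_irrational ?_ hn
    have := hirr
    rwa [Real.logb_div (hp _).1.ne' (hp _).1.ne'] at this
  have hvolprob : IsProbabilityMeasure (volume : Measure (AddCircle (1:ℝ))) :=
    StickBenford.volume_prob
  have hgconv : ∀ g ∈ Submodule.span ℂ (Set.range (@fourier 1)),
      Tendsto (fun N => ∫ z, g z ∂ (μ N)) atTop
        (𝓝 (∫ z, g z ∂ (volume : Measure (AddCircle (1:ℝ))))) := by
    intro g hg
    induction hg using Submodule.span_induction with
    | mem g hgmem =>
      obtain ⟨n, rfl⟩ := hgmem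
      by_cases hn : n = 0
      · subst hn
        have h1 : ∀ (ν : Measure (AddCircle (1:ℝ))), IsProbabilityMeasure ν →
            ∫ z, (fourier 0) z ∂ν = 1 := by
          intro ν hν
          have h2 : ⇑(fourier (T := 1) 0) = fun _ => (1:ℂ) := funext fun z => fourier_zero
          rw [h2, integral_const]
          simp
        have heq : (fun N => ∫ z, (fourier 0) z ∂ (μ N)) = fun _ => (1:ℂ) :=
          funext fun N => h1 (μ N) (hprob N)
        rw [heq, h1 volume hvolprob]
        exact tendsto_const_nhds
      · rw [StickBenford.fourier_integral_zero hn]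
        have heq : (fun N => ∫ z, fourier n z ∂ (μ N)) = fun N => ((∑ i, e n i) / m) ^ N :=
          funext (hweylsum n)
        rw [heq]
        exact tendsto_pow_atTop_nhds_zero_of_norm_lt_one (hS n hn)
    | zero => simp
    | add g1 g2 hg1 hg2 ih1 ih2 =>
      have heq : ∀ (ν : Measure (AddCircle (1:ℝ))), IsFiniteMeasure ν →
          ∫ z, (g1 + g2) z ∂ν = (∫ z, g1 z ∂ν) + ∫ z, g2 z ∂ν := by
        intro ν hν
        simp only [ContinuousMap.coe_add, Pi.add_apply]
        exact integral_add (hint g1 ν hν) (hint g2 ν hν)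
      have heq1 : (fun N => ∫ z, (g1 + g2) z ∂ (μ N))
          = fun N => (∫ z, g1 z ∂ (μ N)) + ∫ z, g2 z ∂ (μ N) :=
        funext fun N => heq (μ N) (hμfin N)
      rw [heq1, heq volume (probToFin _ hvolprob)]
      exact ih1.add ih2
    | smul r g hg ih =>
      have heq : ∀ (ν : Measure (AddCircle (1:ℝ))),
          ∫ z, (r • g) z ∂ν = r • ∫ z, g z ∂ν := by
        intro ν
        simp only [ContinuousMap.coe_smul, Pi.smul_apply]
        exact integral_smul r _
      have heq1 : (fun N => ∫ z, (r • g) z ∂ (μ N)) = fun N => r • ∫ z, g z ∂ (μ N) :=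
        funext fun N => heq (μ N)
      rw [heq1, heq volume]
      exact ih.const_smul r
  have hbc : ∀ f : AddCircle (1:ℝ) →ᵇ ℝ,
      Tendsto (fun N => ∫ z, f z ∂ (μ N)) atTop
        (𝓝 (∫ z, f z ∂ (volume : Measure (AddCircle (1:ℝ))))) := by
    intro f
    set fC : C(AddCircle (1:ℝ), ℂ) :=
      ⟨fun z => ((f z : ℝ) : ℂ), Complex.continuous_ofReal.comp f.continuous⟩ with hfC
    have hC : Tendsto (fun N => ∫ z, fC z ∂ (μ N)) atTop
        (𝓝 (∫ z, fC z ∂ (volume : Measure (AddCircle (1:ℝ))))) := by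
      rw [Metric.tendsto_atTop]
      intro ε hε
      have hmemtop : fC ∈ (Submodule.span ℂ (Set.range (@fourier 1))).topologicalClosure := by
        rw [span_fourier_closure_eq_top]
        trivial
      have hmem : fC ∈ closure ((Submodule.span ℂ (Set.range (@fourier 1)) :
          Submodule ℂ C(AddCircle (1:ℝ), ℂ)) : Set C(AddCircle (1:ℝ), ℂ)) := by
        rw [← Submodule.topologicalClosure_coe]
        exact hmemtop
      obtain ⟨g, hgmem, hgdist⟩ := Metric.mem_closure_iff.mp hmem (ε/3) (by linarith)
      have hbound : ∀ (ν : Measure (AddCircle (1:ℝ))), IsProbabilityMeasure ν →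
          dist (∫ z, fC z ∂ν) (∫ z, g z ∂ν) ≤ dist fC g := by
        intro ν hν
        rw [dist_eq_norm, ← integral_sub (hint fC ν (probToFin _ hν))
          (hint g ν (probToFin _ hν))]
        refine le_trans (norm_integral_le_of_norm_le_const (C := ‖fC - g‖) ?_) ?_
        · exact Filter.Eventually.of_forall fun z => by
            have h3 := ContinuousMap.norm_coe_le_norm (fC - g) z
            simpa using h3
        · rw [probReal_univ, mul_one, dist_eq_norm]
      obtain ⟨N0, hN0⟩ := (Metric.tendsto_atTop.mp (hgconv g hgmem)) (ε/3) (by linarith)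
      refine ⟨N0, fun N hN => ?_⟩
      have h1 := (hbound (μ N) (hprob N)).trans_lt hgdist
      have h2 := hN0 N hN
      have h3 := (hbound volume hvolprob).trans_lt hgdist
      calc dist (∫ z, fC z ∂ (μ N)) (∫ z, fC z ∂ (volume : Measure (AddCircle (1:ℝ))))
          ≤ dist (∫ z, fC z ∂ (μ N)) (∫ z, g z ∂ (μ N))
            + dist (∫ z, g z ∂ (μ N)) (∫ z, g z ∂ (volume : Measure (AddCircle (1:ℝ))))
            + dist (∫ z, g z ∂ (volume : Measure (AddCircle (1:ℝ))))
                (∫ z, fC z ∂ (volume : Measure (AddCircle (1:ℝ)))) := dist_triangle4 _ _ _ _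
        _ < ε/3 + ε/3 + ε/3 := by
            refine add_lt_add (add_lt_add h1 h2) ?_
            rw [dist_comm]
            exact h3
        _ = ε := by ring
    have hre : ∀ (ν : Measure (AddCircle (1:ℝ))),
        ∫ z, fC z ∂ν = ((∫ z, f z ∂ν : ℝ) : ℂ) := by
      intro ν
      exact integral_ofReal
    have htr := (Complex.continuous_re.tendsto _).comp hC
    have heq1 : ((fun z : ℂ => z.re) ∘ fun N => ∫ z, fC z ∂ (μ N))
        = fun N => ∫ z, f z ∂ (μ N) := by
      funext N
      simp [Function.comp, hre (μ N), Complex.ofReal_re]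
    rw [heq1] at htr
    rw [hre volume, Complex.ofReal_re] at htr
    exact htr
  -- conclude via portmanteau
  set P : ℕ → ProbabilityMeasure (AddCircle (1:ℝ)) := fun N => ⟨μ N, hprob N⟩ with hP
  set Pv : ProbabilityMeasure (AddCircle (1:ℝ)) := ⟨volume, hvolprob⟩ with hPv
  have hPt : Tendsto P atTop (𝓝 Pv) :=
    MeasureTheory.ProbabilityMeasure.tendsto_iff_forall_integral_tendsto.mpr (fun f => hbc f)
  have hnull : (Pv : Measure (AddCircle (1:ℝ))) (frontier E) = 0 :=
    StickBenford.frontier_null ha hab hb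
  have hconv :=
    MeasureTheory.ProbabilityMeasure.tendsto_measure_of_null_frontier_of_tendsto' hPt hnull
  have hEv : (Pv : Measure (AddCircle (1:ℝ))) E = ENNReal.ofReal (b - a) :=
    StickBenford.volume_image_Ioo ha hab hb
  rw [hEv] at hconv
  have htoReal := (ENNReal.tendsto_toReal
    (by simp : ENNReal.ofReal (b - a) ≠ ⊤)).comp hconv
  rw [ENNReal.toReal_ofReal (by linarith : (0:ℝ) ≤ b - a)] at htoReal
  refine htoReal.congr fun N => ?_
  show (((P N : Measure (AddCircle (1:ℝ)))) E).toReal = _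
  have hPN : ((P N : Measure (AddCircle (1:ℝ)))) = μ N := rfl
  rw [hPN]
  simp only [hμ]
  rw [StickBenford.apply_sum_smul_dirac _ _ _ (StickBenford.measurable_E)]
  rw [ENNReal.toReal_sum (fun k _ => by
    refine ENNReal.mul_ne_top ENNReal.coe_ne_top ?_
    split <;> simp)]
  rw [Finset.mul_sum]
  refine Finset.sum_congr rfl fun k _ => ?_
  rw [ENNReal.toReal_mul, ENNReal.coe_toReal]
  have hcond : ((((x k : ℝ)) : AddCircle (1:ℝ)) ∈ E)
      = (a < Int.fract (Real.logb B (∏ i, p i ^ k i))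
          ∧ Int.fract (Real.logb B (∏ i, p i ^ k i)) < b) := by
    rw [hlog k, hEdef]
    rw [eq_iff_iff]
    exact (StickBenford.mem_image_Ioo_iff ha.le hb.le _).trans Set.mem_Ioo
  rw [apply_ite ENNReal.toReal, ENNReal.toReal_one, ENNReal.toReal_zero, hcond]
  have hwr : ((w N k : ℝ≥0) : ℝ) = (Nat.multinomial Finset.univ k : ℝ) / (m : ℝ) ^ N := by
    simp only [hw]
    push_cast
    ring
  rw [hwr]
  ring
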